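/- Let L be a number field with ring of integers 𝒪. Then the set of maximal ideals 𝔭 of 𝒪 whose absolute norm is a prime number (i.e., prime ideals of inertia degree 1 over ℚ) is infinite. -/

import Mathlib

set_option synthInstance.maxHeartbeats 1000000
set_option maxHeartbeats 1000000

open Polynomial NumberField

/-- Schur/Euclid: for a nonconstant integer polynomial `f` and nonzero `N`, infinitely many
primes `q` avoid `N` and divide some value of `f`. -/
lemma aux_infinite_primes (f : Polynomial ℤ) (hdeg : 1 ≤ f.natDegree) (N : ℤ) (hN : N ≠ 0) :
    {q : ℕ | q.Prime ∧ ¬ (q : ℤ) ∣ N ∧ ∃ a : ℤ, (q : ℤ) ∣ f.eval a}.Infinite := by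
  apply Set.infinite_of_forall_exists_gt
  intro n
  have hf0 : f ≠ 0 := fun h => by simp [h] at hdeg
  -- choose b with f.eval b ≠ 0
  obtain ⟨b, hb⟩ := (Polynomial.finite_setOf_isRoot hf0).infinite_compl.nonempty
  have hc : f.eval b ≠ 0 := hb
  set c : ℤ := f.eval b with hc_def
  set M : ℤ := N * (n.factorial : ℤ) with hM_def
  have hM : M ≠ 0 := mul_ne_zero hN (by exact_mod_cast n.factorial_ne_zero)
  -- the set of arguments with small values is finite
  have hT : {y : ℤ | |f.eval y| ≤ |c|}.Finite := by
    have : {y : ℤ | |f.eval y| ≤ |c|} ⊆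
        ⋃ v ∈ (Finset.Icc (-|c|) |c| : Finset ℤ), {y : ℤ | (f - C v).IsRoot y} := by
      intro y hy
      simp only [Set.mem_iUnion, Set.mem_setOf_eq]
      refine ⟨f.eval y, ?_, ?_⟩
      · simp only [Finset.mem_Icc]
        exact abs_le.mp hy
      · simp [IsRoot]
    refine Set.Finite.subset (Set.Finite.biUnion (Finset.finite_toSet _) fun v _ => ?_) this
    apply Polynomial.finite_setOf_isRoot
    intro h
    have : f = C v := sub_eq_zero.mp h
    rw [this] at hdeg
    simp at hdeg
  -- choose t with |f.eval (b + c*M*t)| > |c|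
  have hinj : Function.Injective (fun t : ℤ => b + c * M * t) := by
    intro t₁ t₂ h
    simp only at h
    exact mul_left_cancel₀ (mul_ne_zero hc hM) (by linarith)
  have hpre : ((fun t : ℤ => b + c * M * t) ⁻¹' {y : ℤ | |f.eval y| ≤ |c|}).Finite :=
    hT.preimage hinj.injOn
  obtain ⟨t, ht⟩ := hpre.infinite_compl.nonempty
  set y : ℤ := b + c * M * t with hy_def
  have hbig : |c| < |f.eval y| := not_le.mp ht
  -- c*M*t divides f.eval y - c
  have hdvd : c * M * t ∣ f.eval y - c := by
    have := Polynomial.sub_dvd_eval_sub y b f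
    simpa [hy_def] using this
  obtain ⟨s, hs⟩ := hdvd
  have heval : f.eval y = c * (1 + M * t * s) := by linarith [hs]
  set w : ℤ := 1 + M * t * s with hw_def
  have hw1 : 1 < |w| := by
    have h0 : 0 < |c| := abs_pos.mpr hc
    have : |c| * 1 < |c| * |w| := by
      calc |c| * 1 = |c| := by ring
      _ < |f.eval y| := hbig
      _ = |c| * |w| := by rw [heval, abs_mul]
    exact lt_of_mul_lt_mul_left this (le_of_lt h0)
  obtain ⟨q, hq, hqw⟩ := Nat.exists_prime_and_dvd (n := w.natAbs)
    (by rw [Int.abs_eq_natAbs, Nat.one_lt_cast] at hw1; omega)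
  have hqw' : (q : ℤ) ∣ w := Int.dvd_natAbs.mp (Int.natCast_dvd_natCast.mpr hqw)
  have hqM : ¬ (q : ℤ) ∣ M := by
    intro h
    have h1 : (q : ℤ) ∣ 1 := by
      have := dvd_sub hqw' (h.mul_right (t * s))
      simpa [hw_def, mul_assoc] using this
    exact hq.one_lt.ne' (by exact_mod_cast Int.eq_one_of_dvd_one (by positivity) h1)
  refine ⟨q, ⟨hq, fun h => hqM (h.mul_right _), ⟨y, ?_⟩⟩, ?_⟩
  · rw [heval]
    exact Dvd.dvd.mul_left hqw' c
  · by_contra h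
    push_neg at h
    exact hqM (Dvd.dvd.mul_left (by exact_mod_cast Nat.dvd_factorial hq.pos h) N)

/-- Every nonzero algebraic integer divides a nonzero rational integer. -/
lemma aux_dvd_int {L : Type*} [Field L] [NumberField L] (d : 𝓞 L) (hd : d ≠ 0) :
    ∃ N : ℤ, N ≠ 0 ∧ d ∣ (N : 𝓞 L) := by
  have hint : IsIntegral ℤ d := NumberField.RingOfIntegers.isIntegral d
  set f := minpoly ℤ d with hf
  have hfd : f ≠ 0 := minpoly.ne_zero hint
  have haev : Polynomial.aeval d f = 0 := minpoly.aeval ℤ d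
  have hkey : d * Polynomial.aeval d f.divX + (f.coeff 0 : 𝓞 L) = 0 := by
    have := congrArg (Polynomial.aeval d) (Polynomial.X_mul_divX_add f)
    rw [haev] at this
    simpa [mul_comm] using this
  have hc0 : f.coeff 0 ≠ 0 := by
    intro h
    have hdvx : Polynomial.aeval d f.divX = 0 := by
      have : d * Polynomial.aeval d f.divX = 0 := by
        simpa [h] using hkey
      exact (mul_eq_zero.mp this).resolve_left hd
    have hdx0 : f.divX ≠ 0 := by
      intro h'
      apply hfd
      rw [← Polynomial.X_mul_divX_add f, h', h]
      simp
    have := minpoly.IsIntegrallyClosed.degree_le_of_ne_zero hdx0 hdvx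
    have h2 := Polynomial.degree_divX_lt hfd
    rw [← hf] at this
    exact absurd (lt_of_le_of_lt this h2) (lt_irrefl _)
  refine ⟨f.coeff 0, hc0, ⟨-Polynomial.aeval d f.divX, ?_⟩⟩
  have : ((f.coeff 0 : ℤ) : 𝓞 L) = -(d * Polynomial.aeval d f.divX) := by
    linear_combination hkey
  rw [this]
  ring

/-- Scaling a generator by a nonzero integer preserves the adjoined field. -/
lemma aux_adjoin_smul {L : Type*} [Field L] [NumberField L] (γ : L) (y : ℤ) (hy : y ≠ 0)
    (h : Algebra.adjoin ℚ ({γ} : Set L) = ⊤) :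
    Algebra.adjoin ℚ ({algebraMap ℤ L y * γ} : Set L) = ⊤ := by
  rw [← top_le_iff, ← h]
  apply Algebra.adjoin_le
  have hmem : algebraMap ℤ L y * γ ∈ Algebra.adjoin ℚ ({algebraMap ℤ L y * γ} : Set L) :=
    Algebra.self_mem_adjoin_singleton ℚ _
  have := Subalgebra.smul_mem _ hmem ((y : ℚ)⁻¹)
  have heq : ((y : ℚ)⁻¹) • (algebraMap ℤ L y * γ) = γ := by
    rw [Algebra.smul_def, ← mul_assoc]
    have : (algebraMap ℚ L) (y : ℚ)⁻¹ * algebraMap ℤ L y = 1 := by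
      have h1 : algebraMap ℤ L y = algebraMap ℚ L (y : ℚ) := by
        simp [map_intCast]
      rw [h1, ← map_mul, inv_mul_cancel₀ (by exact_mod_cast hy), map_one]
    rw [this, one_mul]
  rw [heq] at this
  intro z hz
  rw [Set.mem_singleton_iff] at hz
  subst hz
  exact this

/-- Given a root of the minimal polynomial mod `q` and coprimality with the conductor,
produce a degree-one prime above `q`. -/
lemma aux_exists_ideal {L : Type*} [Field L] [NumberField L] (θ : 𝓞 L)
    (N : ℤ) (hNmem : algebraMap ℤ (𝓞 L) N ∈ conductor ℤ θ)
    (q : ℕ) (hq : q.Prime) (hqN : ¬ (q : ℤ) ∣ N) (a : ℤ)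
    (ha : (q : ℤ) ∣ (minpoly ℤ θ).eval a) :
    ∃ 𝔭 : Ideal (𝓞 L), 𝔭.IsMaximal ∧ Ideal.absNorm 𝔭 = q := by
  haveI : Fact q.Prime := ⟨hq⟩
  have hθint : IsIntegral ℤ θ := NumberField.RingOfIntegers.isIntegral θ
  set I : Ideal ℤ := Ideal.span {(q : ℤ)} with hI
  -- coprimality of I with the conductor
  have h_cop : (conductor ℤ θ).comap (algebraMap ℤ (𝓞 L)) ⊔ I = ⊤ := by
    rw [Ideal.eq_top_iff_one]
    have hcp : IsCoprime (N : ℤ) (q : ℤ) := by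
      rw [Int.isCoprime_iff_gcd_eq_one]
      have hnd : ¬ q ∣ N.natAbs := fun h => hqN (Int.dvd_natAbs.mp (Int.natCast_dvd_natCast.mpr h))
      have := (hq.coprime_iff_not_dvd.mpr hnd).symm
      simpa [Int.gcd, Nat.Coprime] using this
    obtain ⟨u, v, huv⟩ := hcp
    rw [← huv]
    refine Submodule.add_mem _ (Ideal.mem_sup_left ?_) (Ideal.mem_sup_right ?_)
    · exact Ideal.mul_mem_left _ u (Ideal.mem_comap.mpr hNmem)
    · exact Ideal.mul_mem_left _ v (Ideal.mem_span_singleton_self _)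
  have h_alg : Function.Injective (algebraMap (Algebra.adjoin ℤ ({θ} : Set (𝓞 L))) (𝓞 L)) :=
    fun x y h => Subtype.ext h
  -- the isomorphism of quotients
  let e1 := quotAdjoinEquivQuotMap (x := θ) (I := I) h_cop h_alg
  -- the map to ZMod q from the adjoin side
  have hroot : (minpoly ℤ θ).eval₂ (Int.castRingHom (ZMod q)) ((a : ℤ) : ZMod q) = 0 := by
    have h1 : (minpoly ℤ θ).eval₂ (Int.castRingHom (ZMod q)) ((Int.castRingHom (ZMod q)) a)
        = (Int.castRingHom (ZMod q)) ((minpoly ℤ θ).eval a) := by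
      rw [Polynomial.eval₂_at_apply]
    rw [show ((a : ℤ) : ZMod q) = (Int.castRingHom (ZMod q)) a from rfl, h1]
    simpa using (ZMod.intCast_zmod_eq_zero_iff_dvd _ _).mpr ha
  let ψ0 : AdjoinRoot (minpoly ℤ θ) →+* ZMod q :=
    AdjoinRoot.lift (Int.castRingHom (ZMod q)) ((a : ℤ) : ZMod q) hroot
  let ψ : Algebra.adjoin ℤ ({θ} : Set (𝓞 L)) →+* ZMod q :=
    ψ0.comp (minpoly.equivAdjoin hθint).symm.toAlgHom.toRingHom
  have hJker : ∀ r ∈ I.map (algebraMap ℤ (Algebra.adjoin ℤ ({θ} : Set (𝓞 L)))), ψ r = 0 := by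
    intro r hr
    rw [hI, Ideal.map_span, Set.image_singleton, Ideal.mem_span_singleton] at hr
    obtain ⟨z, rfl⟩ := hr
    rw [map_mul]
    have : ψ (algebraMap ℤ _ (q : ℤ)) = 0 := by
      rw [show (algebraMap ℤ (Algebra.adjoin ℤ ({θ} : Set (𝓞 L)))) (q : ℤ) = ((q : ℤ) : _) from
        map_intCast _ _, map_intCast]
      simp
    rw [this, zero_mul]
  let Φ : 𝓞 L →+* ZMod q :=
    ((Ideal.Quotient.lift _ ψ hJker).comp e1.symm.toRingHom).comp
      (Ideal.Quotient.mk (I.map (algebraMap ℤ (𝓞 L))))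
  have Φsurj : Function.Surjective Φ := by
    intro z
    obtain ⟨m, rfl⟩ := ZMod.intCast_surjective z
    exact ⟨(m : 𝓞 L), map_intCast Φ m⟩
  refine ⟨RingHom.ker Φ, RingHom.ker_isMaximal_of_surjective Φ Φsurj, ?_⟩
  rw [Ideal.absNorm_apply, Submodule.cardQuot_apply]
  rw [Nat.card_congr (RingHom.quotientKerEquivOfSurjective Φsurj).toEquiv]
  simp [Nat.card_eq_fintype_card, ZMod.card]

/-- The conductor of a generator contains a nonzero rational integer. -/
lemma aux_conductor {L : Type*} [Field L] [NumberField L] (θ : 𝓞 L)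
    (h_top : Algebra.adjoin ℚ ({algebraMap (𝓞 L) L θ} : Set L) = ⊤) :
    ∃ N : ℤ, N ≠ 0 ∧ algebraMap ℤ (𝓞 L) N ∈ conductor ℤ θ := by
  have hθint : IsIntegral ℤ θ := NumberField.RingOfIntegers.isIntegral θ
  set d := Polynomial.aeval θ (Polynomial.derivative (minpoly ℤ θ)) with hd
  have hcond := conductor_mul_differentIdeal ℤ ℚ L θ h_top
  have hd_mem : d ∈ conductor ℤ θ := by
    have h1 : d ∈ Ideal.span {d} := Ideal.mem_span_singleton_self d
    rw [← hcond] at h1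
    exact Ideal.mul_le_left h1
  have hd0 : d ≠ 0 := by
    have hsep := Algebra.IsSeparable.isSeparable ℚ (algebraMap (𝓞 L) L θ)
    have hne := hsep.aeval_derivative_ne_zero (minpoly.aeval ℚ (algebraMap (𝓞 L) L θ))
    intro h
    apply hne
    rw [minpoly.isIntegrallyClosed_eq_field_fractions ℚ L hθint, Polynomial.derivative_map,
      Polynomial.aeval_map_algebraMap, Polynomial.aeval_algebraMap_apply, ← hd, h, map_zero]
  obtain ⟨N, hN0, e, he⟩ := aux_dvd_int d hd0
  refine ⟨N, hN0, ?_⟩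
  have h2 : algebraMap ℤ (𝓞 L) N = (N : 𝓞 L) := map_intCast _ _
  rw [h2, he]
  exact Ideal.mul_mem_right e _ hd_mem

/-- Kronecker: every number field has infinitely many prime ideals of inertia degree one. -/
theorem kronecker_degree_one_primes (L : Type*) [Field L] [NumberField L] :
    {𝔭 : Ideal (𝓞 L) | 𝔭.IsMaximal ∧ (Ideal.absNorm 𝔭).Prime}.Infinite := by
  obtain ⟨γ, hγ⟩ := Field.exists_primitive_element ℚ L
  have hγ_adj : Algebra.adjoin ℚ ({γ} : Set L) = ⊤ := by
    have h1 := congrArg IntermediateField.toSubalgebra hγ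
    rwa [IntermediateField.adjoin_simple_toSubalgebra_of_isAlgebraic (IsAlgebraic.of_finite ℚ γ),
      IntermediateField.top_toSubalgebra] at h1
  have hγ_alg : IsAlgebraic ℤ γ :=
    (IsFractionRing.isAlgebraic_iff ℤ ℚ L).mpr (Algebra.IsAlgebraic.isAlgebraic γ)
  obtain ⟨y, hy, hxy⟩ := hγ_alg.exists_integral_multiple
  set θ : 𝓞 L := ⟨algebraMap ℤ L y * γ, by
    have h : IsIntegral ℤ (algebraMap ℤ L y * γ) := by simpa [zsmul_eq_mul] using hxy
    exact h⟩ with hθ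
  have hθint : IsIntegral ℤ θ := NumberField.RingOfIntegers.isIntegral θ
  have h_top : Algebra.adjoin ℚ ({algebraMap (𝓞 L) L θ} : Set L) = ⊤ := by
    have : algebraMap (𝓞 L) L θ = algebraMap ℤ L y * γ := rfl
    rw [this]
    exact aux_adjoin_smul γ y hy hγ_adj
  obtain ⟨N, hN0, hNmem⟩ := aux_conductor θ h_top
  have hfdeg : 1 ≤ (minpoly ℤ θ).natDegree := minpoly.natDegree_pos hθint
  have hS := aux_infinite_primes (minpoly ℤ θ) hfdeg N hN0
  apply Set.Infinite.of_image (f := Ideal.absNorm)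
  apply hS.mono
  rintro q ⟨hqp, hqN, a, ha⟩
  obtain ⟨𝔭, hmax, hnorm⟩ := aux_exists_ideal θ N hNmem q hqp hqN a ha
  exact ⟨𝔭, ⟨hmax, hnorm ▸ hqp⟩, hnorm⟩
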